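/- First half of the semantics-equivalence proof: for every environment V, expression e, and n ∈ ℕ, if V ⊢ e ⇒ μₙ within n steps, then μₙ ≤ ⟦e⟧_⇓^V pointwise. -/

import Mathlib

set_option maxHeartbeats 1000000

open scoped ENNReal NNRat NNReal
open Classical

noncomputable section

/-! ## Syntax -/

/-- Rational probabilities `p ∈ [0,1]`. -/
abbrev Probability : Type := {p : ℚ≥0 // p ≤ 1}

/-- Expressions of the probabilistic language in share-let-normal form (Figure 3). -/
inductive Expr : Type where
  | var (x : ℕ)                                          -- variable
  | unit                                                 -- null tuple
  | nil                                                  -- empty list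
  | cons (x₁ x₂ : ℕ)                                     -- cons list
  | matL (x : ℕ) (e₀ : Expr) (x₁ x₂ : ℕ) (e₁ : Expr)     -- pattern match
  | fn (f x : ℕ) (e : Expr)                              -- recursive function
  | app (x₁ x₂ : ℕ)                                      -- application
  | tick (q : ℚ≥0)                                       -- cost
  | elet (e₁ : Expr) (x : ℕ) (e₂ : Expr)                 -- definition
  | share (x x₁ x₂ : ℕ) (e : Expr)                       -- sharing
  | flip (p : Probability) (e₁ e₂ : Expr)                -- coin flip
  | prob (p : Probability)                               -- probability literal
  | flipS (x : ℕ) (e₁ e₂ : Expr)                         -- symbolic flip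

/-- Values: unit, lists, probability values and function closures. -/
inductive Val : Type where
  | unit
  | nil
  | cons (v₁ v₂ : Val)
  | prob (p : Probability)
  | clos (V : List (ℕ × Val)) (f x : ℕ) (e : Expr)

/-- Evaluation environments: finite maps from variables to values. -/
abbrev Env : Type := List (ℕ × Val)

/-- Environment lookup `V(x)`. -/
def Env.find : Env → ℕ → Option Val
  | [], _ => none
  | (y, v) :: V, x => if y = x then some v else Env.find V x

/-! ## Trace-based cost semantics (Figure 5) -/

/-- Outcomes of coin flips. -/
inductive Coin : Type where
  | H
  | T

/-- Trace-based evaluation judgment `V ⊢ e ⇓ v | q` with probability `p` and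
trace `σ` (Figure 5). -/
inductive Eval : Env → Expr → Val → ℚ≥0 → ℚ≥0 → List Coin → Prop where
  | var : Env.find V x = some v → Eval V (.var x) v 0 1 []
  | unit : Eval V .unit .unit 0 1 []
  | nil : Eval V .nil .nil 0 1 []
  | cons : Env.find V x₁ = some v₁ → Env.find V x₂ = some v₂ →
      Eval V (.cons x₁ x₂) (.cons v₁ v₂) 0 1 []
  | matL₁ : Env.find V x = some .nil → Eval V e₀ v q p σ →
      Eval V (.matL x e₀ x₁ x₂ e₁) v q p σ
  | matL₂ : Env.find V x = some (.cons v₁ v₂) →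
      Eval ((x₁, v₁) :: (x₂, v₂) :: V) e₁ v q p σ →
      Eval V (.matL x e₀ x₁ x₂ e₁) v q p σ
  | tick : Eval V (.tick q) .unit q 1 []
  | elet : Eval V e₁ v₁ q₁ p₁ σ₁ → Eval ((x, v₁) :: V) e₂ v₂ q₂ p₂ σ₂ →
      Eval V (.elet e₁ x e₂) v₂ (q₁ + q₂) (p₁ * p₂) (σ₁ ++ σ₂)
  | fn : Eval V (.fn f x e) (.clos V f x e) 0 1 []
  | app : Env.find V x₁ = some (.clos V' f x e) → Env.find V x₂ = some v₂ →
      Eval ((f, .clos V' f x e) :: (x, v₂) :: V') e v q p σ →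
      Eval V (.app x₁ x₂) v q p σ
  | flip₁ : Eval V e₁ v₁ q₁ p₁ σ →
      Eval V (.flip p e₁ e₂) v₁ q₁ (p.1 * p₁) (.H :: σ)
  | flip₂ : Eval V e₂ v₂ q₂ p₂ σ →
      Eval V (.flip p e₁ e₂) v₂ q₂ ((1 - p.1) * p₂) (.T :: σ)
  | share : Env.find V x = some v →
      Eval ((x₁, v) :: (x₂, v) :: V) e v' q p σ →
      Eval V (.share x x₁ x₂ e) v' q p σ
  | prob : Eval V (.prob p) (.prob p) 0 1 []
  | flipS₁ : Env.find V x = some (.prob p) → Eval V e₁ v₁ q₁ p₁ σ →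
      Eval V (.flipS x e₁ e₂) v₁ q₁ (p.1 * p₁) (.H :: σ)
  | flipS₂ : Env.find V x = some (.prob p) → Eval V e₂ v₂ q₂ p₂ σ →
      Eval V (.flipS x e₁ e₂) v₂ q₂ ((1 - p.1) * p₂) (.T :: σ)

/-! ## Types and potential (Figure 4) -/

/-- Types: unit, lists `L(⟨τ, q⟩)`, arrows `⟨τ₁,q₁⟩ → ⟨τ₂,q₂⟩`, and
probability types `prob(q_H, q_T)`. -/
inductive Ty : Type where
  | unit
  | list (τ : Ty) (q : ℚ≥0)
  | arrow (τ₁ : Ty) (q₁ : ℚ≥0) (τ₂ : Ty) (q₂ : ℚ≥0)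
  | prob (qH qT : ℚ≥0)

/-- Potential-annotated types `A = ⟨τ, q⟩`. -/
abbrev ATy : Type := Ty × ℚ≥0

/-- The potential function `Φ(v : τ)`. -/
def pot : Val → Ty → ℚ≥0
  | .cons v₁ v₂, .list τ q => (pot v₁ τ + q) + pot v₂ (.list τ q)
  | .prob p, .prob qH qT => qH * p.1 + qT * (1 - p.1)
  | _, _ => 0

/-- The potential function `Φ(v : A)` for annotated types `A = ⟨τ, q⟩`. -/
def potA (v : Val) (A : ATy) : ℚ≥0 := pot v A.1 + A.2

/-- The value `[v₁, …, vₙ]` corresponding to a Lean list of values. -/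
def listVal : List Val → Val
  | [] => .nil
  | v :: vs => .cons v (listVal vs)

/-- The sharing relation `share(τ; τ₁, τ₂)`. -/
inductive Share : Ty → Ty → Ty → Prop where
  | unit : Share .unit .unit .unit
  | list : Share τ τ₁ τ₂ → q = q₁ + q₂ →
      Share (.list τ q) (.list τ₁ q₁) (.list τ₂ q₂)
  | arrow : Share (.arrow τ₁ q₁ τ₂ q₂) (.arrow τ₁ q₁ τ₂ q₂) (.arrow τ₁ q₁ τ₂ q₂)
  | prob : qH = qH₁ + qH₂ → qT = qT₁ + qT₂ →
      Share (.prob qH qT) (.prob qH₁ qT₁) (.prob qH₂ qT₂)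

/-- Sharing for annotated types: `share(⟨τ,q⟩; ⟨τ₁,q₁⟩, ⟨τ₂,q₂⟩)`. -/
def ShareA (A A₁ A₂ : ATy) : Prop := Share A.1 A₁.1 A₂.1 ∧ A.2 = A₁.2 + A₂.2

/-- Potential scaling `p × τ`. -/
def scaleTy (p : ℚ≥0) : Ty → Ty
  | .unit => .unit
  | .list τ q => .list (scaleTy p τ) (p * q)
  | .arrow τ₁ q₁ τ₂ q₂ => .arrow τ₁ q₁ τ₂ q₂
  | .prob qH qT => .prob (p * qH) (p * qT)

/-- Potential scaling `p × A` for annotated types. -/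
def scaleA (p : ℚ≥0) (A : ATy) : ATy := (scaleTy p A.1, p * A.2)

/-- Typing contexts. -/
abbrev Ctx : Type := List (ℕ × Ty)

/-- Scaling of typing contexts `p × Γ`. -/
def scaleCtx (p : ℚ≥0) (Γ : Ctx) : Ctx := Γ.map fun xt => (xt.1, scaleTy p xt.2)

/-- Zeroing of potential annotations `|τ|`. -/
def zeroTy : Ty → Ty
  | .unit => .unit
  | .list τ _ => .list (zeroTy τ) 0
  | .arrow τ₁ q₁ τ₂ q₂ => .arrow τ₁ q₁ τ₂ q₂
  | .prob _ _ => .prob 0 0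

/-- Zeroing of contexts `|Γ|`. -/
def zeroCtx (Γ : Ctx) : Ctx := Γ.map fun xt => (xt.1, zeroTy xt.2)

/-- The sharing relation lifted pointwise to typing contexts. -/
inductive ShareCtx : Ctx → Ctx → Ctx → Prop where
  | nil : ShareCtx [] [] []
  | cons : Share τ τ₁ τ₂ → ShareCtx Γ Γ₁ Γ₂ →
      ShareCtx ((x, τ) :: Γ) ((x, τ₁) :: Γ₁) ((x, τ₂) :: Γ₂)

/-- Subtyping `τ <: τ'`. -/
inductive SubTy : Ty → Ty → Prop where
  | unit : SubTy .unit .unit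
  | list : SubTy τ₁ τ₂ → q₁ ≥ q₂ → SubTy (.list τ₁ q₁) (.list τ₂ q₂)
  | arrow : SubTy τ₂ τ₁ → q₂ ≥ q₁ → SubTy σ₁ σ₂ → p₁ ≥ p₂ →
      SubTy (.arrow τ₁ q₁ σ₁ p₁) (.arrow τ₂ q₂ σ₂ p₂)
  | prob : qH₁ ≥ qH₂ → qT₁ ≥ qT₂ → SubTy (.prob qH₁ qT₁) (.prob qH₂ qT₂)

/-! ## The affine typing judgment (Figure 6) -/

/-- The typing judgment `Γ; q ⊢ e : A` of Figure 6. -/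
inductive Typing : Ctx → ℚ≥0 → Expr → ATy → Prop where
  | var : Typing [(x, τ)] 0 (.var x) (τ, 0)
  | unit : Typing [] 0 .unit (.unit, 0)
  | nil : Typing [] 0 .nil (.list τ p, 0)
  | cons : Typing [(x₁, τ), (x₂, .list τ p)] p (.cons x₁ x₂) (.list τ p, 0)
  | matL : Typing Γ q e₀ B →
      Typing ((x₁, τ) :: (x₂, .list τ p) :: Γ) (q + p) e₁ B →
      Typing ((x, .list τ p) :: Γ) q (.matL x e₀ x₁ x₂ e₁) B
  | tick : Typing [] q (.tick q) (.unit, 0)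
  | elet : Typing Γ₁ q e₁ (τ, p) → Typing ((x, τ) :: Γ₂) p e₂ B →
      Typing (Γ₁ ++ Γ₂) q (.elet e₁ x e₂) B
  | app : Typing [(x₁, .arrow τ q σ p), (x₂, τ)] q (.app x₁ x₂) (σ, p)
  | fn : zeroCtx Γ = Γ →
      Typing ((f, .arrow τ q σ p) :: (x, τ) :: Γ) q e (σ, p) →
      Typing Γ 0 (.fn f x e) (.arrow τ q σ p, 0)
  | share : Share τ τ₁ τ₂ →
      Typing ((x₁, τ₁) :: (x₂, τ₂) :: Γ) q e B →
      Typing ((x, τ) :: Γ) q (.share x x₁ x₂ e) B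
  | flip : ShareCtx Γ (scaleCtx p.1 Γ₁) (scaleCtx (1 - p.1) Γ₂) →
      q = p.1 * q₁ + (1 - p.1) * q₂ →
      Typing Γ₁ q₁ e₁ A → Typing Γ₂ q₂ e₂ A →
      Typing Γ q (.flip p e₁ e₂) A
  | prob : q = p.1 * qH + (1 - p.1) * qT →
      Typing [] q (.prob p) (.prob qH qT, 0)
  | flipS : Typing Γ (q + qH) e₁ A → Typing Γ (q + qT) e₂ A →
      Typing ((x, .prob qH qT) :: Γ) q (.flipS x e₁ e₂) A
  | sub : Typing Γ q e (τ', q') → SubTy τ' τ → Typing Γ q e (τ, q')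
  | sup : Typing ((x, τ) :: Γ) q e B → SubTy τ' τ → Typing ((x, τ') :: Γ) q e B
  | weak : Typing Γ q e B → Typing ((x, τ) :: Γ) q e B
  | relax : ∀ {Γ : Ctx} {p q p' q' : ℚ≥0} {τ : Ty} {e : Expr},
      Typing Γ p e (τ, p') → p ≤ q → (p : ℚ) - (p' : ℚ) ≤ (q : ℚ) - (q' : ℚ) →
      Typing Γ q e (τ, q')
  | exch : Typing Γ q e B → Γ.Perm Γ' → Typing Γ' q e B

/-! ## Value and environment typing (Figure 8) -/

mutual
  /-- The value typing judgment `v : τ` (Figure 8); it ignores potential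
  annotations. -/
  inductive VTy : Val → Ty → Prop where
    | unit : VTy .unit .unit
    | prob : VTy (.prob p) (.prob qH qT)
    | nil : VTy .nil (.list τ q)
    | cons : VTy v₁ τ → VTy v₂ (.list τ q) → VTy (.cons v₁ v₂) (.list τ q)
    | clos : EnvTy V Γ →
        Typing ((f, .arrow τ q σ p) :: (x, τ) :: zeroCtx Γ) q e (σ, p) →
        VTy (.clos V f x e) (.arrow τ q σ p)

  /-- `V : Γ` : the environment `V` has typing context `Γ`. -/
  inductive EnvTy : Env → Ctx → Prop where
    | nil : EnvTy V []
    | cons : Env.find V x = some v → VTy v τ → EnvTy V Γ → EnvTy V ((x, τ) :: Γ)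
end

/-- The potential `Φ(V : Γ)` of an environment with respect to a context. -/
def potCtx (V : Env) (Γ : Ctx) : ℚ≥0 :=
  (Γ.map fun xt => ((Env.find V xt.1).map fun v => pot v xt.2).getD 0).sum

/-! ## Distribution-based cost semantics (Figure 7) -/

/-- Embedding of nonnegative rationals into `ℝ≥0∞`. -/
def qe (q : ℚ≥0) : ℝ≥0∞ := ((q : ℝ≥0) : ℝ≥0∞)

/-- The point distribution `δ(a)`. -/
def dirac {α : Type*} (a : α) : α → ℝ≥0∞ := fun b => if b = a then 1 else 0

/-- Subprobability distributions on value–cost pairs. -/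
abbrev SubDist : Type := Val × ℚ≥0 → ℝ≥0∞

/-- Monadic composition used in rule DE:Let: costs are added. -/
def letBind (μ : SubDist) (κ : Val × ℚ≥0 → SubDist) : SubDist := fun b =>
  ∑' a₁ : Val × ℚ≥0, ∑' a₂ : Val × ℚ≥0,
    μ a₁ * κ a₁ a₂ * dirac (a₂.1, a₁.2 + a₂.2) b

/-- Depth-indexed distribution-based evaluation judgment
`V ⊢ e ⇒ μ` within `n` steps (Figure 7). -/
inductive Step : Env → Expr → SubDist → ℕ → Prop where
  | base : Step V e (fun _ => 0) 0
  | var : 0 < n → Env.find V x = some v → Step V (.var x) (dirac (v, 0)) n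
  | unit : 0 < n → Step V .unit (dirac (.unit, 0)) n
  | nil : 0 < n → Step V .nil (dirac (.nil, 0)) n
  | cons : 0 < n → Env.find V x₁ = some v₁ → Env.find V x₂ = some v₂ →
      Step V (.cons x₁ x₂) (dirac (.cons v₁ v₂, 0)) n
  | matL₁ : Env.find V x = some .nil → Step V e₀ μ n →
      Step V (.matL x e₀ x₁ x₂ e₁) μ (n + 1)
  | matL₂ : Env.find V x = some (.cons v₁ v₂) →
      Step ((x₁, v₁) :: (x₂, v₂) :: V) e₁ μ n →
      Step V (.matL x e₀ x₁ x₂ e₁) μ (n + 1)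
  | tick : 0 < n → Step V (.tick q) (dirac (.unit, q)) n
  | fn : 0 < n → Step V (.fn f x e) (dirac (.clos V f x e, 0)) n
  | app : Env.find V x₁ = some (.clos V' f x e) → Env.find V x₂ = some v₂ →
      Step ((f, .clos V' f x e) :: (x, v₂) :: V') e μ n →
      Step V (.app x₁ x₂) μ (n + 1)
  | elet : Step V e₁ μ n →
      (∀ a : Val × ℚ≥0, μ a ≠ 0 → Step ((x, a.1) :: V) e₂ (κ a) n) →
      Step V (.elet e₁ x e₂) (letBind μ κ) (n + 1)
  | share : Env.find V x = some v →
      Step ((x₁, v) :: (x₂, v) :: V) e μ n →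
      Step V (.share x x₁ x₂ e) μ (n + 1)
  | flip : Step V e₁ μ₁ n → Step V e₂ μ₂ n →
      Step V (.flip p e₁ e₂) (fun a => qe p.1 * μ₁ a + qe (1 - p.1) * μ₂ a) (n + 1)
  | prob : 0 < n → Step V (.prob p) (dirac (.prob p, 0)) n
  | flipS : Env.find V x = some (.prob p) → Step V e₁ μ₁ n → Step V e₂ μ₂ n →
      Step V (.flipS x e₁ e₂) (fun a => qe p.1 * μ₁ a + qe (1 - p.1) * μ₂ a) (n + 1)

/-- `⟦e⟧_⇒^V`: the pointwise supremum of all distributions derivable in the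
depth-indexed distribution-based semantics. -/
def dsem (V : Env) (e : Expr) : SubDist := fun a =>
  ⨆ (n : ℕ) (μ : SubDist) (_ : Step V e μ n), μ a

/-- `⟦e⟧_⇓^V(v, q) = Σ_σ p_σ`, summing the probabilities of all finite traces
with which `e` evaluates to `v` with cost `q`. -/
def tsem (V : Env) (e : Expr) : SubDist := fun a =>
  ∑' σ : List Coin, ⨆ (p : ℚ≥0) (_ : Eval V e a.1 a.2 p σ), qe p

/-- `νₙ`: the restriction of `⟦e⟧_⇓^V` to traces of length at most `n`. -/
def tsemN (V : Env) (e : Expr) (n : ℕ) : SubDist := fun a =>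
  ∑' σ : List Coin,
    if σ.length ≤ n then ⨆ (p : ℚ≥0) (_ : Eval V e a.1 a.2 p σ), qe p else 0

end


section AuxLemmas

theorem qe_mul (a b : ℚ≥0) : qe (a * b) = qe a * qe b := by simp [qe]

theorem qe_one : qe 1 = 1 := by simp [qe]

theorem tsum_le_tsum_inj_support {α β : Type*} (f : α → ℝ≥0∞) (g : β → ℝ≥0∞) (m : α → β)
    (hle : ∀ a, f a ≤ g (m a))
    (hinj : ∀ a a', f a ≠ 0 → f a' ≠ 0 → m a = m a' → a = a') :
    ∑' a, f a ≤ ∑' b, g b := by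
  rw [← tsum_subtype_support f]
  have hinj' : Function.Injective fun a : Function.support f => m a :=
    fun a a' h => Subtype.ext (hinj _ _ a.2 a'.2 h)
  calc ∑' a : Function.support f, f ↑a ≤ ∑' a : Function.support f, g (m ↑a) :=
        Summable.tsum_le_tsum (fun a => hle a) ENNReal.summable ENNReal.summable
    _ ≤ ∑' b, g b := ENNReal.tsum_comp_le_tsum_of_injective hinj' g

theorem exists_of_iSup_ne {P : ℚ≥0 → Prop}
    (h : (⨆ p, ⨆ _ : P p, qe p) ≠ 0) : ∃ p, P p := by
  by_contra hc
  push_neg at hc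
  exact h (le_antisymm (iSup_le fun p => iSup_le fun hp => (hc p hp).elim) zero_le)

/-- Trace determinism: evaluation results are determined once one trace is a
prefix of the other. -/
theorem trace_eval_det {V : Env} {e : Expr} {v v' : Val} {q q' p p' : ℚ≥0} {σ σ' : List Coin}
    (h : Eval V e v q p σ) (h' : Eval V e v' q' p' σ')
    (hc : σ <+: σ' ∨ σ' <+: σ) : v = v' ∧ q = q' ∧ p = p' ∧ σ = σ' := by
  induction h generalizing v' q' p' σ' with
  | var hf => cases h' with | var hf' => rw [hf] at hf'; exact ⟨(Option.some.inj hf'), rfl, rfl, rfl⟩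
  | unit => cases h'; exact ⟨rfl, rfl, rfl, rfl⟩
  | nil => cases h'; exact ⟨rfl, rfl, rfl, rfl⟩
  | cons hf₁ hf₂ =>
    cases h' with
    | cons hf₁' hf₂' =>
      rw [hf₁] at hf₁'; rw [hf₂] at hf₂'
      exact ⟨by rw [Option.some.inj hf₁', Option.some.inj hf₂'], rfl, rfl, rfl⟩
  | matL₁ hf he ih =>
    cases h' with
    | matL₁ hf' he' => exact ih he' hc
    | matL₂ hf' he' => rw [hf] at hf'; cases hf'
  | matL₂ hf he ih =>
    cases h' with
    | matL₁ hf' he' => rw [hf] at hf'; cases hf'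
    | matL₂ hf' he' =>
      rw [hf] at hf'
      obtain ⟨h1, h2⟩ := Val.cons.inj (Option.some.inj hf')
      subst h1; subst h2
      exact ih he' hc
  | tick => cases h'; exact ⟨rfl, rfl, rfl, rfl⟩
  | elet h₁ h₂ ih₁ ih₂ =>
    cases h' with
    | elet h₁' h₂' =>
      obtain ⟨hv, hq, hp, hσ⟩ := ih₁ h₁' (by
        rcases hc with hc | hc
        · exact List.prefix_or_prefix_of_prefix
            ((List.prefix_append _ _).trans hc) (List.prefix_append _ _)
        · exact (List.prefix_or_prefix_of_prefix
            ((List.prefix_append _ _).trans hc) (List.prefix_append _ _)).symm)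
      subst hv; subst hq; subst hp; subst hσ
      obtain ⟨hv, hq, hp, hσ⟩ := ih₂ h₂' (by
        rcases hc with hc | hc
        · exact Or.inl ((List.prefix_append_right_inj _).mp hc)
        · exact Or.inr ((List.prefix_append_right_inj _).mp hc))
      subst hv; subst hq; subst hp; subst hσ
      exact ⟨rfl, rfl, rfl, rfl⟩
  | fn => cases h'; exact ⟨rfl, rfl, rfl, rfl⟩
  | app hf₁ hf₂ he ih =>
    cases h' with
    | app hf₁' hf₂' he' =>
      rw [hf₁] at hf₁'; rw [hf₂] at hf₂'
      obtain ⟨hV, hff, hxx, hee⟩ := Val.clos.inj (Option.some.inj hf₁')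
      subst hV; subst hff; subst hxx; subst hee
      have := Option.some.inj hf₂'; subst this
      exact ih he' hc
  | flip₁ he ih =>
    cases h' with
    | flip₁ he' =>
      obtain ⟨hv, hq, hp, hσ⟩ := ih he' (by
        rcases hc with hc | hc
        · exact Or.inl (List.cons_prefix_cons.mp hc).2
        · exact Or.inr (List.cons_prefix_cons.mp hc).2)
      subst hv; subst hq; subst hp; subst hσ
      exact ⟨rfl, rfl, rfl, rfl⟩
    | flip₂ he' =>
      rcases hc with hc | hc
      · exact absurd (List.cons_prefix_cons.mp hc).1 (by intro h; cases h)
      · exact absurd (List.cons_prefix_cons.mp hc).1 (by intro h; cases h)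
  | flip₂ he ih =>
    cases h' with
    | flip₁ he' =>
      rcases hc with hc | hc
      · exact absurd (List.cons_prefix_cons.mp hc).1 (by intro h; cases h)
      · exact absurd (List.cons_prefix_cons.mp hc).1 (by intro h; cases h)
    | flip₂ he' =>
      obtain ⟨hv, hq, hp, hσ⟩ := ih he' (by
        rcases hc with hc | hc
        · exact Or.inl (List.cons_prefix_cons.mp hc).2
        · exact Or.inr (List.cons_prefix_cons.mp hc).2)
      subst hv; subst hq; subst hp; subst hσ
      exact ⟨rfl, rfl, rfl, rfl⟩
  | share hf he ih =>
    cases h' with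
    | share hf' he' =>
      rw [hf] at hf'; have := Option.some.inj hf'; subst this
      exact ih he' hc
  | prob => cases h'; exact ⟨rfl, rfl, rfl, rfl⟩
  | flipS₁ hf he ih =>
    cases h' with
    | flipS₁ hf' he' =>
      rw [hf] at hf'
      have := Val.prob.inj (Option.some.inj hf'); subst this
      obtain ⟨hv, hq, hp, hσ⟩ := ih he' (by
        rcases hc with hc | hc
        · exact Or.inl (List.cons_prefix_cons.mp hc).2
        · exact Or.inr (List.cons_prefix_cons.mp hc).2)
      subst hv; subst hq; subst hp; subst hσ
      exact ⟨rfl, rfl, rfl, rfl⟩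
    | flipS₂ hf' he' =>
      rcases hc with hc | hc
      · exact absurd (List.cons_prefix_cons.mp hc).1 (by intro h; cases h)
      · exact absurd (List.cons_prefix_cons.mp hc).1 (by intro h; cases h)
  | flipS₂ hf he ih =>
    cases h' with
    | flipS₁ hf' he' =>
      rcases hc with hc | hc
      · exact absurd (List.cons_prefix_cons.mp hc).1 (by intro h; cases h)
      · exact absurd (List.cons_prefix_cons.mp hc).1 (by intro h; cases h)
    | flipS₂ hf' he' =>
      rw [hf] at hf'
      have := Val.prob.inj (Option.some.inj hf'); subst this
      obtain ⟨hv, hq, hp, hσ⟩ := ih he' (by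
        rcases hc with hc | hc
        · exact Or.inl (List.cons_prefix_cons.mp hc).2
        · exact Or.inr (List.cons_prefix_cons.mp hc).2)
      subst hv; subst hq; subst hp; subst hσ
      exact ⟨rfl, rfl, rfl, rfl⟩

end AuxLemmas


section MainAux

theorem tsem_le_of {V V' : Env} {e e' : Expr}
    (h : ∀ v q p σ, Eval V' e' v q p σ → Eval V e v q p σ) (a : Val × ℚ≥0) :
    tsem V' e' a ≤ tsem V e a :=
  Summable.tsum_le_tsum (fun σ => iSup_le fun p => iSup_le fun he =>
    le_iSup₂ (f := fun p (_ : Eval V e a.1 a.2 p σ) => qe p) p (h _ _ _ _ he))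
    ENNReal.summable ENNReal.summable

theorem dirac_le_tsem {V : Env} {e : Expr} {v : Val} {q : ℚ≥0}
    (h : Eval V e v q 1 []) (a : Val × ℚ≥0) : dirac (v, q) a ≤ tsem V e a := by
  by_cases ha : a = (v, q)
  · subst ha
    have h1 : qe 1 ≤ ⨆ p, ⨆ _ : Eval V e v q p ([] : List Coin), qe p :=
      le_iSup₂ (f := fun p (_ : Eval V e v q p ([] : List Coin)) => qe p) 1 h
    calc dirac (v, q) (v, q) = 1 := by simp [dirac]
      _ ≤ ⨆ p, ⨆ _ : Eval V e v q p ([] : List Coin), qe p := by rwa [qe_one] at h1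
      _ ≤ tsem V e (v, q) := ENNReal.le_tsum ([] : List Coin)
  · simp [dirac, ha]

theorem cons_sum_le (g : List Coin → ℝ≥0∞) :
    (∑' σ, g (.H :: σ)) + ∑' σ, g (.T :: σ) ≤ ∑' σ, g σ := by
  have h := tsum_le_tsum_inj_support
    (fun p : Bool × List Coin => g ((cond p.1 Coin.H Coin.T) :: p.2)) g
    (fun p => (cond p.1 Coin.H Coin.T) :: p.2) (fun a => le_rfl) ?_
  · rw [ENNReal.tsum_prod', tsum_bool] at h
    simpa [add_comm] using h
  · rintro ⟨b, σ⟩ ⟨b', σ'⟩ _ _ hm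
    simp only [List.cons.injEq] at hm
    obtain ⟨h1, h2⟩ := hm
    cases b <;> cases b' <;> first | (exact congrArg _ h2) | (cases h1)

theorem branch_sup_le {V : Env} {e e₁ : Expr} {a : Val × ℚ≥0} {c : ℚ≥0} (σ : List Coin) (cn : Coin)
    (hrule : ∀ p₁ v q, Eval V e₁ v q p₁ σ → Eval V e v q (c * p₁) (cn :: σ)) :
    qe c * (⨆ p, ⨆ _ : Eval V e₁ a.1 a.2 p σ, qe p) ≤
      ⨆ p, ⨆ _ : Eval V e a.1 a.2 p (cn :: σ), qe p := by
  rw [ENNReal.mul_iSup]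
  refine iSup_le fun p₁ => ?_
  rw [ENNReal.mul_iSup]
  refine iSup_le fun he => ?_
  rw [← qe_mul]
  exact le_iSup₂ (f := fun p (_ : Eval V e a.1 a.2 p (cn :: σ)) => qe p) (c * p₁) (hrule _ _ _ he)

theorem sup_mul_sup_le {V : Env} {e₁ e₂ : Expr} {x : ℕ} (a₁ a₂ : Val × ℚ≥0) (σ₁ σ₂ : List Coin) :
    (⨆ p, ⨆ _ : Eval V e₁ a₁.1 a₁.2 p σ₁, qe p) *
      (⨆ p, ⨆ _ : Eval ((x, a₁.1) :: V) e₂ a₂.1 a₂.2 p σ₂, qe p) ≤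
    ⨆ p, ⨆ _ : Eval V (.elet e₁ x e₂) a₂.1 (a₁.2 + a₂.2) p (σ₁ ++ σ₂), qe p := by
  rw [ENNReal.iSup_mul]
  refine iSup_le fun p₁ => ?_
  rw [ENNReal.iSup_mul]
  refine iSup_le fun h₁ => ?_
  rw [ENNReal.mul_iSup]
  refine iSup_le fun p₂ => ?_
  rw [ENNReal.mul_iSup]
  refine iSup_le fun h₂ => ?_
  rw [← qe_mul]
  exact le_iSup₂ (f := fun p (_ : Eval V (.elet e₁ x e₂) a₂.1 (a₁.2 + a₂.2) p (σ₁ ++ σ₂)) => qe p)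
    (p₁ * p₂) (Eval.elet h₁ h₂)

theorem elet_bound {V : Env} {e₁ e₂ : Expr} {x : ℕ} (μ : SubDist) (κ : Val × ℚ≥0 → SubDist)
    (h₁ : ∀ a, μ a ≤ tsem V e₁ a)
    (h₂ : ∀ a, μ a ≠ 0 → ∀ b, κ a b ≤ tsem ((x, a.1) :: V) e₂ b)
    (b : Val × ℚ≥0) :
    letBind μ κ b ≤ tsem V (.elet e₁ x e₂) b := by
  have step1 : letBind μ κ b ≤
      ∑' a₁ : Val × ℚ≥0, ∑' a₂ : Val × ℚ≥0,
        (∑' σ₁, ⨆ p, ⨆ _ : Eval V e₁ a₁.1 a₁.2 p σ₁, qe p) *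
          (∑' σ₂, ⨆ p, ⨆ _ : Eval ((x, a₁.1) :: V) e₂ a₂.1 a₂.2 p σ₂, qe p) *
          dirac (a₂.1, a₁.2 + a₂.2) b := by
    refine Summable.tsum_le_tsum (fun a₁ => Summable.tsum_le_tsum (fun a₂ => ?_)
      ENNReal.summable ENNReal.summable) ENNReal.summable ENNReal.summable
    by_cases hμ : μ a₁ = 0
    · simp [hμ]
    · exact mul_le_mul_left (mul_le_mul (h₁ a₁) (h₂ a₁ hμ a₂) zero_le zero_le) _
  refine step1.trans ?_
  have step2 : (∑' a₁ : Val × ℚ≥0, ∑' a₂ : Val × ℚ≥0,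
        (∑' σ₁, ⨆ p, ⨆ _ : Eval V e₁ a₁.1 a₁.2 p σ₁, qe p) *
          (∑' σ₂, ⨆ p, ⨆ _ : Eval ((x, a₁.1) :: V) e₂ a₂.1 a₂.2 p σ₂, qe p) *
          dirac (a₂.1, a₁.2 + a₂.2) b)
      = ∑' t : (Val × ℚ≥0) × (Val × ℚ≥0) × List Coin × List Coin,
          (⨆ p, ⨆ _ : Eval V e₁ t.1.1 t.1.2 p t.2.2.1, qe p) *
            (⨆ p, ⨆ _ : Eval ((x, t.1.1) :: V) e₂ t.2.1.1 t.2.1.2 p t.2.2.2, qe p) *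
            dirac (t.2.1.1, t.1.2 + t.2.1.2) b := by
    have e3 : ∀ a₁ a₂ : Val × ℚ≥0,
        (∑' σ₁, ⨆ p, ⨆ _ : Eval V e₁ a₁.1 a₁.2 p σ₁, qe p) *
          (∑' σ₂, ⨆ p, ⨆ _ : Eval ((x, a₁.1) :: V) e₂ a₂.1 a₂.2 p σ₂, qe p) *
          dirac (a₂.1, a₁.2 + a₂.2) b
        = ∑' s : List Coin × List Coin,
            (⨆ p, ⨆ _ : Eval V e₁ a₁.1 a₁.2 p s.1, qe p) *
              (⨆ p, ⨆ _ : Eval ((x, a₁.1) :: V) e₂ a₂.1 a₂.2 p s.2, qe p) *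
              dirac (a₂.1, a₁.2 + a₂.2) b := by
      intro a₁ a₂
      rw [ENNReal.tsum_prod']
      rw [mul_assoc, ← ENNReal.tsum_mul_right]
      refine tsum_congr fun σ₁ => ?_
      rw [← ENNReal.tsum_mul_right, ← ENNReal.tsum_mul_left]
      refine tsum_congr fun σ₂ => ?_
      rw [mul_assoc]
    calc (∑' a₁ : Val × ℚ≥0, ∑' a₂ : Val × ℚ≥0,
        (∑' σ₁, ⨆ p, ⨆ _ : Eval V e₁ a₁.1 a₁.2 p σ₁, qe p) *
          (∑' σ₂, ⨆ p, ⨆ _ : Eval ((x, a₁.1) :: V) e₂ a₂.1 a₂.2 p σ₂, qe p) *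
          dirac (a₂.1, a₁.2 + a₂.2) b)
        = ∑' a₁ : Val × ℚ≥0, ∑' a₂ : Val × ℚ≥0, ∑' s : List Coin × List Coin,
            (⨆ p, ⨆ _ : Eval V e₁ a₁.1 a₁.2 p s.1, qe p) *
              (⨆ p, ⨆ _ : Eval ((x, a₁.1) :: V) e₂ a₂.1 a₂.2 p s.2, qe p) *
              dirac (a₂.1, a₁.2 + a₂.2) b :=
          tsum_congr fun a₁ => tsum_congr fun a₂ => e3 a₁ a₂
      _ = ∑' a₁ : Val × ℚ≥0, ∑' z : (Val × ℚ≥0) × (List Coin × List Coin),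
            (⨆ p, ⨆ _ : Eval V e₁ a₁.1 a₁.2 p z.2.1, qe p) *
              (⨆ p, ⨆ _ : Eval ((x, a₁.1) :: V) e₂ z.1.1 z.1.2 p z.2.2, qe p) *
              dirac (z.1.1, a₁.2 + z.1.2) b :=
          tsum_congr fun a₁ => (ENNReal.tsum_prod'
            (f := fun z : (Val × ℚ≥0) × (List Coin × List Coin) =>
              (⨆ p, ⨆ _ : Eval V e₁ a₁.1 a₁.2 p z.2.1, qe p) *
                (⨆ p, ⨆ _ : Eval ((x, a₁.1) :: V) e₂ z.1.1 z.1.2 p z.2.2, qe p) *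
                dirac (z.1.1, a₁.2 + z.1.2) b)).symm
      _ = _ := (ENNReal.tsum_prod'
            (f := fun t : (Val × ℚ≥0) × (Val × ℚ≥0) × List Coin × List Coin =>
              (⨆ p, ⨆ _ : Eval V e₁ t.1.1 t.1.2 p t.2.2.1, qe p) *
                (⨆ p, ⨆ _ : Eval ((x, t.1.1) :: V) e₂ t.2.1.1 t.2.1.2 p t.2.2.2, qe p) *
                dirac (t.2.1.1, t.1.2 + t.2.1.2) b)).symm
  rw [step2]
  refine tsum_le_tsum_inj_support _
    (fun σ => ⨆ p, ⨆ _ : Eval V (.elet e₁ x e₂) b.1 b.2 p σ, qe p)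
    (fun t => t.2.2.1 ++ t.2.2.2) ?_ ?_
  · rintro ⟨a₁, a₂, σ₁, σ₂⟩
    by_cases hd : b = (a₂.1, a₁.2 + a₂.2)
    · subst hd
      have : dirac (a₂.1, a₁.2 + a₂.2) (a₂.1, a₁.2 + a₂.2) = 1 := by simp [dirac]
      rw [this, mul_one]
      exact sup_mul_sup_le a₁ a₂ σ₁ σ₂
    · have : dirac (a₂.1, a₁.2 + a₂.2) b = 0 := by simp [dirac, hd]
      rw [this, mul_zero]
      exact zero_le
  · rintro ⟨a₁, a₂, σ₁, σ₂⟩ ⟨a₁', a₂', σ₁', σ₂'⟩ hF hF' heq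
    simp only at heq
    have hpre : σ₁ <+: σ₁' ++ σ₂' := by
      rw [← heq]; exact List.prefix_append σ₁ σ₂
    have hcomp : (σ₁ <+: σ₁' ∨ σ₁' <+: σ₁) :=
      List.prefix_or_prefix_of_prefix hpre (List.prefix_append σ₁' σ₂')
    simp only [ne_eq, mul_eq_zero, not_or] at hF hF'
    obtain ⟨⟨hS₁, hS₂⟩, hD⟩ := hF
    obtain ⟨⟨hS₁', hS₂'⟩, hD'⟩ := hF'
    obtain ⟨p₁, hE₁⟩ := exists_of_iSup_ne hS₁
    obtain ⟨p₂, hE₂⟩ := exists_of_iSup_ne hS₂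
    obtain ⟨p₁', hE₁'⟩ := exists_of_iSup_ne hS₁'
    obtain ⟨p₂', hE₂'⟩ := exists_of_iSup_ne hS₂'
    have hb : b = (a₂.1, a₁.2 + a₂.2) := by
      by_contra hbb; exact hD (by simp [dirac, hbb])
    have hb' : b = (a₂'.1, a₁'.2 + a₂'.2) := by
      by_contra hbb; exact hD' (by simp [dirac, hbb])
    obtain ⟨hv1, hq1, _, hσ1⟩ := trace_eval_det hE₁ hE₁' hcomp
    have ha₁ : a₁ = a₁' := Prod.ext hv1 hq1
    subst hσ1
    have hσ2 : σ₂ = σ₂' := List.append_cancel_left heq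
    subst hσ2
    subst ha₁
    obtain ⟨hv2, hq2, _, _⟩ := trace_eval_det hE₂ hE₂' (Or.inl (List.prefix_refl _))
    have ha₂ : a₂ = a₂' := Prod.ext hv2 hq2
    subst ha₂
    rfl

end MainAux

/-- **First half of the semantics-equivalence proof**: for every environment
`V`, expression `e`, and `n ∈ ℕ`, if `V ⊢ e ⇒ μₙ` within `n` steps, then
`μₙ ≤ ⟦e⟧_⇓^V` pointwise. -/
theorem step_le_tsem (V : Env) (e : Expr) (n : ℕ) (μ : SubDist)
    (h : Step V e μ n) : ∀ a : Val × ℚ≥0, μ a ≤ tsem V e a := by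
  induction h with
  | base => exact fun a => zero_le
  | var hn hf => exact dirac_le_tsem (Eval.var hf)
  | unit hn => exact dirac_le_tsem Eval.unit
  | nil hn => exact dirac_le_tsem Eval.nil
  | cons hn hf₁ hf₂ => exact dirac_le_tsem (Eval.cons hf₁ hf₂)
  | matL₁ hf hs ih =>
    exact fun a => (ih a).trans (tsem_le_of (fun v q p σ he => Eval.matL₁ hf he) a)
  | matL₂ hf hs ih =>
    exact fun a => (ih a).trans (tsem_le_of (fun v q p σ he => Eval.matL₂ hf he) a)
  | tick hn => exact dirac_le_tsem Eval.tick
  | fn hn => exact dirac_le_tsem Eval.fn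
  | app hf₁ hf₂ hs ih =>
    exact fun a => (ih a).trans (tsem_le_of (fun v q p σ he => Eval.app hf₁ hf₂ he) a)
  | elet hs hκ ih ihκ => exact elet_bound _ _ ih ihκ
  | share hf hs ih =>
    exact fun a => (ih a).trans (tsem_le_of (fun v q p σ he => Eval.share hf he) a)
  | flip hs₁ hs₂ ih₁ ih₂ =>
    rename_i W ee₁ ν₁ m ee₂ ν₂ pp
    intro a
    refine le_trans (add_le_add (mul_le_mul_right (ih₁ a) _) (mul_le_mul_right (ih₂ a) _)) ?_
    simp only [tsem]
    rw [← ENNReal.tsum_mul_left, ← ENNReal.tsum_mul_left]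
    refine le_trans (add_le_add
      (Summable.tsum_le_tsum (fun σ => branch_sup_le (e := .flip pp ee₁ ee₂) σ .H
        fun p₁ v q he => Eval.flip₁ he) ENNReal.summable ENNReal.summable)
      (Summable.tsum_le_tsum (fun σ => branch_sup_le (e := .flip pp ee₁ ee₂) σ .T
        fun p₁ v q he => Eval.flip₂ he) ENNReal.summable ENNReal.summable)) ?_
    exact cons_sum_le _
  | prob hn => exact dirac_le_tsem Eval.prob
  | flipS hf hs₁ hs₂ ih₁ ih₂ =>
    rename_i W x pp ee₁ ν₁ m ee₂ ν₂
    intro a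
    refine le_trans (add_le_add (mul_le_mul_right (ih₁ a) _) (mul_le_mul_right (ih₂ a) _)) ?_
    simp only [tsem]
    rw [← ENNReal.tsum_mul_left, ← ENNReal.tsum_mul_left]
    refine le_trans (add_le_add
      (Summable.tsum_le_tsum (fun σ => branch_sup_le (e := .flipS x ee₁ ee₂) σ .H
        fun p₁ v q he => Eval.flipS₁ hf he) ENNReal.summable ENNReal.summable)
      (Summable.tsum_le_tsum (fun σ => branch_sup_le (e := .flipS x ee₁ ee₂) σ .T
        fun p₁ v q he => Eval.flipS₂ hf he) ENNReal.summable ENNReal.summable)) ?_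
    exact cons_sum_le _
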